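/- Let ε > 0, let N ≥ 1 be an integer, and let x be a strictly ordered particle solution on [0,∞). Then for every p ∈ [1,∞) and every t ≥ 0, ‖ρ^N(·,t)‖_{L^p(ℝ)} ≤ max{ ‖ρ^N(·,0)‖_{L^p(ℝ)}, (2ε)^{−(p−1)/p} }, and ‖ρ^N(·,t)‖_{L^∞(ℝ)} ≤ max{ ‖ρ^N(·,0)‖_{L^∞(ℝ)}, 1/(2ε) }. -/

import Mathlib

open MeasureTheory Real Set
open scoped ENNReal

/-- Scaled Morse potential `W_ε(x) = (1/(2ε)) e^{-|x|/ε}`. -/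
noncomputable def Morse (ε x : ℝ) : ℝ := (1 / (2 * ε)) * Real.exp (-|x| / ε)

/-- Derivative of the scaled Morse potential,
`W_ε'(x) = -(1/(2ε²)) sign(x) e^{-|x|/ε}`. -/
noncomputable def Morse' (ε x : ℝ) : ℝ :=
  -(1 / (2 * ε ^ 2)) * Real.sign x * Real.exp (-|x| / ε)

/-- Right-hand side of the particle ODE system:
`(1/N) ∑_{k=0}^{N-1} (W_ε(x_{k+1}-x_i) - W_ε(x_k-x_i))/(x_{k+1}-x_k)`. -/
noncomputable def particleRHS (ε : ℝ) (N : ℕ) (x : ℕ → ℝ) (i : ℕ) : ℝ :=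
  (1 / (N : ℝ)) * ∑ k ∈ Finset.range N,
    (Morse ε (x (k + 1) - x i) - Morse ε (x k - x i)) / (x (k + 1) - x k)

/-- A strictly ordered particle solution on `[0,∞)`:  a differentiable curve
`x = (x_0,…,x_N)` with `x_0(t) < ⋯ < x_N(t)` for all `t ≥ 0`, solving the particle ODE. -/
def IsParticleSol (ε : ℝ) (N : ℕ) (x : ℝ → ℕ → ℝ) : Prop :=
  (∀ t : ℝ, 0 ≤ t → ∀ i < N, x t i < x t (i + 1)) ∧
  (∀ i ≤ N, ∀ t : ℝ, 0 ≤ t →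
    HasDerivWithinAt (fun s => x s i) (particleRHS ε N (x t) i) (Set.Ici 0) t)

/-- The discrete (piecewise constant) density
`ρ^N(y,t) = ∑_{k=0}^{N-1} R_k(t) 1_{[x_k(t), x_{k+1}(t))}(y)` with `R_k = 1/(N d_k)`. -/
noncomputable def discDens (N : ℕ) (x : ℝ → ℕ → ℝ) (y t : ℝ) : ℝ :=
  ∑ k ∈ Finset.range N,
    Set.indicator (Set.Ico (x t k) (x t (k + 1)))
      (fun _ => 1 / ((N : ℝ) * (x t (k + 1) - x t k))) y

/-- Convolution in the space variable: `(W ∗ ρ)(x) = ∫ W(x-y) ρ(y) dy`. -/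
noncomputable def conv (W ρ : ℝ → ℝ) (x : ℝ) : ℝ := ∫ y, W (x - y) * ρ y

lemma morse_np {ε s : ℝ} (hs : s ≤ 0) : Morse ε s = (1 / (2 * ε)) * Real.exp (s / ε) := by
  unfold Morse
  rw [abs_of_nonpos hs, neg_neg]

lemma morse_nn {ε s : ℝ} (hs : 0 ≤ s) : Morse ε s = (1 / (2 * ε)) * Real.exp (-s / ε) := by
  unfold Morse
  rw [abs_of_nonneg hs]

lemma key (ε : ℝ) (hε : 0 < ε) (N : ℕ) (x : ℕ → ℝ)
    (hord : ∀ i < N, x i < x (i + 1)) (g : ℕ → ℝ) (hg : ∀ k < N, 0 ≤ g k)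
    (hcheb : ∀ j k, j < N → k < N →
      g k / (x (j + 1) - x j) + g j / (x (k + 1) - x k) ≤
        g j / (x (j + 1) - x j) + g k / (x (k + 1) - x k)) :
    0 ≤ ∑ k ∈ Finset.range N,
      g k * (particleRHS ε N x (k + 1) - particleRHS ε N x k) := by
  -- notation
  set d : ℕ → ℝ := fun k => x (k + 1) - x k with hd_def
  have hd : ∀ k < N, 0 < d k := fun k hk => sub_pos.2 (hord k hk)
  have hxm : ∀ i j, i ≤ j → j ≤ N → x i ≤ x j := by
    intro i j hij hjN
    induction j with
    | zero => simp_all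
    | succ m ih =>
      rcases Nat.eq_or_lt_of_le hij with h | h
      · simp [h]
      · exact le_trans (ih (Nat.lt_succ_iff.1 h) (le_trans (Nat.le_succ m) hjN))
          (hord m (Nat.lt_of_succ_le hjN)).le
  set E : ℕ → ℝ := fun k => Real.exp (x k / ε) with hE_def
  set Fn : ℕ → ℝ := fun k => Real.exp (-x k / ε) with hFn_def
  set A : ℕ → ℝ := fun k => E (k + 1) - E k with hA_def
  set C : ℕ → ℝ := fun k => Fn k - Fn (k + 1) with hC_def
  have hEF : ∀ k, E k * Fn k = 1 := by
    intro k; simp [hE_def, hFn_def, ← Real.exp_add, neg_div]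
  have hsplit : ∀ a b : ℕ, Real.exp ((x a - x b) / ε) = E a * Fn b := by
    intro a b
    have : (x a - x b) / ε = x a / ε + -x b / ε := by ring
    rw [this, Real.exp_add]
  have hEpos : ∀ k, 0 < E k := fun k => Real.exp_pos _
  have hFpos : ∀ k, 0 < Fn k := fun k => Real.exp_pos _
  have hA0 : ∀ k < N, 0 ≤ A k := by
    intro k hk
    exact sub_nonneg.2 (Real.exp_le_exp.2 (div_le_div_of_nonneg_right (hord k hk).le hε.le))
  have hC0 : ∀ k < N, 0 ≤ C k := by
    intro k hk
    refine sub_nonneg.2 (Real.exp_le_exp.2 ?_)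
    have := (hord k hk).le
    have h2 : -x (k+1) ≤ -x k := by linarith
    exact div_le_div_of_nonneg_right h2 hε.le
  -- the bracket in the difference of RHS
  set B : ℕ → ℕ → ℝ := fun j k =>
    (Morse ε (x (j + 1) - x (k + 1)) - Morse ε (x j - x (k + 1))) -
      (Morse ε (x (j + 1) - x k) - Morse ε (x j - x k)) with hB_def
  have hBlt : ∀ j k, j < k → k < N → B j k = -(1 / (2 * ε)) * (A j * C k) := by
    intro j k hjk hkN
    have h1 : x (j + 1) - x (k + 1) ≤ 0 :=
      sub_nonpos.2 (hxm _ _ (Nat.succ_le_succ hjk.le) hkN)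
    have h2 : x j - x (k + 1) ≤ 0 :=
      sub_nonpos.2 (hxm _ _ (le_trans (Nat.le_succ j) (Nat.succ_le_succ hjk.le)) hkN)
    have h3 : x (j + 1) - x k ≤ 0 := sub_nonpos.2 (hxm _ _ hjk hkN.le)
    have h4 : x j - x k ≤ 0 := sub_nonpos.2 (hxm _ _ hjk.le hkN.le)
    rw [hB_def]
    simp only
    rw [morse_np h1, morse_np h2, morse_np h3, morse_np h4,
      hsplit, hsplit, hsplit, hsplit, hA_def, hC_def]
    ring
  have hBgt : ∀ j k, k < j → j < N → B j k = -(1 / (2 * ε)) * (C j * A k) := by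
    intro j k hkj hjN
    have h1 : 0 ≤ x (j + 1) - x (k + 1) :=
      sub_nonneg.2 (hxm _ _ (Nat.succ_le_succ hkj.le) (Nat.succ_le_of_lt hjN))
    have h2 : 0 ≤ x j - x (k + 1) := sub_nonneg.2 (hxm _ _ hkj hjN.le)
    have h3 : 0 ≤ x (j + 1) - x k :=
      sub_nonneg.2 (hxm _ _ (le_trans hkj.le (Nat.le_succ j)) (Nat.succ_le_of_lt hjN))
    have h4 : 0 ≤ x j - x k := sub_nonneg.2 (hxm _ _ hkj.le hjN.le)
    have hsplit2 : ∀ a b : ℕ, Real.exp (-(x a - x b) / ε) = Fn a * E b := by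
      intro a b
      have : -(x a - x b) / ε = -x a / ε + x b / ε := by ring
      rw [this, Real.exp_add]
    rw [hB_def]
    simp only
    rw [morse_nn h1, morse_nn h2, morse_nn h3, morse_nn h4,
      hsplit2, hsplit2, hsplit2, hsplit2, hA_def, hC_def]
    ring
  have hBeq : ∀ k, k < N → B k k = (1 / ε) * (1 - E k * Fn (k + 1)) := by
    intro k hkN
    have h2 : x k - x (k + 1) ≤ 0 := sub_nonpos.2 (hord k hkN).le
    have h3 : 0 ≤ x (k + 1) - x k := sub_nonneg.2 (hord k hkN).le
    have hsplit2 : ∀ a b : ℕ, Real.exp (-(x a - x b) / ε) = Fn a * E b := by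
      intro a b
      have : -(x a - x b) / ε = -x a / ε + x b / ε := by ring
      rw [this, Real.exp_add]
    rw [hB_def]
    simp only [sub_self]
    rw [morse_np h2, morse_nn h3, hsplit, hsplit2]
    have h0 : Morse ε 0 = 1 / (2 * ε) := by
      unfold Morse; simp
    rw [h0]
    have hkk : Fn (k + 1) * E k = E k * Fn (k + 1) := by ring
    rw [hkk]
    field_simp
    ring
  -- difference of RHS as a sum of brackets
  have hv : ∀ k : ℕ, particleRHS ε N x (k + 1) - particleRHS ε N x k
      = (1 / (N : ℝ)) * ∑ j ∈ Finset.range N, B j k / d j := by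
    intro k
    unfold particleRHS
    rw [← mul_sub, ← Finset.sum_sub_distrib]
    congr 1
    refine Finset.sum_congr rfl fun j hj => ?_
    rw [hB_def]
    exact (div_sub_div_same _ _ _)
  -- inner splitting
  have hinner : ∀ k, k < N → ∑ j ∈ Finset.range N, B j k / d j
      = (1 / ε) * (1 - E k * Fn (k + 1)) / d k
        - (1 / (2 * ε)) * ((∑ j ∈ Finset.range k, A j / d j) * C k
            + (∑ j ∈ Finset.Ico (k + 1) N, C j / d j) * A k) := by
    intro k hkN
    have hsplit1 : ∑ j ∈ Finset.range N, B j k / d j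
        = ∑ j ∈ Finset.range k, B j k / d j + ∑ j ∈ Finset.Ico k N, B j k / d j := by
      rw [Finset.range_eq_Ico,
        ← Finset.sum_Ico_consecutive (fun j => B j k / d j) (Nat.zero_le k) hkN.le,
        ← Finset.range_eq_Ico]
    rw [hsplit1, Finset.sum_eq_sum_Ico_succ_bot hkN, hBeq k hkN]
    have e1 : ∑ j ∈ Finset.range k, B j k / d j
        = ∑ j ∈ Finset.range k, -(1 / (2 * ε)) * (A j * C k / d j) := by
      refine Finset.sum_congr rfl fun j hj => ?_
      rw [hBlt j k (Finset.mem_range.1 hj) hkN]; ring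
    have e2 : ∑ j ∈ Finset.Ico (k + 1) N, B j k / d j
        = ∑ j ∈ Finset.Ico (k + 1) N, -(1 / (2 * ε)) * (C j * A k / d j) := by
      refine Finset.sum_congr rfl fun j hj => ?_
      obtain ⟨h1, h2⟩ := Finset.mem_Ico.1 hj
      rw [hBgt j k (Nat.lt_of_succ_le h1) h2]; ring
    have e3 : ∑ j ∈ Finset.range k, A j * C k / d j
        = (∑ j ∈ Finset.range k, A j / d j) * C k := by
      rw [Finset.sum_mul]
      exact Finset.sum_congr rfl fun j _ => by ring
    have e4 : ∑ j ∈ Finset.Ico (k + 1) N, C j * A k / d j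
        = (∑ j ∈ Finset.Ico (k + 1) N, C j / d j) * A k := by
      rw [Finset.sum_mul]
      exact Finset.sum_congr rfl fun j _ => by ring
    rw [e1, e2, ← Finset.mul_sum, ← Finset.mul_sum, e3, e4]
    ring
  -- main decomposition
  set U : ℝ := ∑ k ∈ Finset.range N, 2 * ((1 - E k * Fn (k + 1)) * (g k / d k)) with hU_def
  set T1 : ℝ := ∑ k ∈ Finset.range N, g k * ((∑ j ∈ Finset.range k, A j / d j) * C k)
    with hT1_def
  set T2 : ℝ := ∑ k ∈ Finset.range N, g k * ((∑ j ∈ Finset.Ico (k + 1) N, C j / d j) * A k)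
    with hT2_def
  have hmain : ∑ k ∈ Finset.range N, g k * (particleRHS ε N x (k + 1) - particleRHS ε N x k)
      = (1 / (2 * (N : ℝ) * ε)) * (U - (T1 + T2)) := by
    rw [hU_def, hT1_def, hT2_def, ← Finset.sum_add_distrib, ← Finset.sum_sub_distrib,
      Finset.mul_sum]
    refine Finset.sum_congr rfl fun k hk => ?_
    rw [hv k, hinner k (Finset.mem_range.1 hk)]
    ring
  rw [hmain]
  apply mul_nonneg
  · positivity
  · rw [sub_nonneg]
    -- telescoping sums
    have teleC : ∀ a b : ℕ, a ≤ b → ∑ k ∈ Finset.Ico a b, C k = Fn a - Fn b := by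
      intro a b hab
      have h1 := Finset.sum_Ico_consecutive C (Nat.zero_le a) hab
      rw [← Finset.range_eq_Ico, ← Finset.range_eq_Ico] at h1
      have h2 : ∀ n : ℕ, ∑ k ∈ Finset.range n, C k = Fn 0 - Fn n := by
        intro n
        simpa [hC_def] using Finset.sum_range_sub' Fn n
      linarith [h2 a, h2 b]
    have teleA : ∀ k : ℕ, ∑ j ∈ Finset.range k, A j = E k - E 0 := by
      intro k
      simpa [hA_def] using Finset.sum_range_sub E k
    have hgd : ∀ k, k < N → 0 ≤ g k / d k := fun k hk => div_nonneg (hg k hk) (hd k hk).le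
    have hT1' : T1 = ∑ k ∈ Finset.range N, ∑ j ∈ Finset.range k, g k * (A j * C k) / d j := by
      rw [hT1_def]
      refine Finset.sum_congr rfl fun k _ => ?_
      rw [Finset.sum_mul, Finset.mul_sum]
      exact Finset.sum_congr rfl fun j _ => by ring
    have hT2' : T2 = ∑ k ∈ Finset.range N, ∑ j ∈ Finset.range k, g j * (A j * C k) / d k := by
      rw [hT2_def]
      have step : ∀ k ∈ Finset.range N,
          g k * ((∑ j ∈ Finset.Ico (k + 1) N, C j / d j) * A k)
            = ∑ j ∈ Finset.Ico (k + 1) N, g k * (C j * A k) / d j := by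
        intro k _
        rw [Finset.sum_mul, Finset.mul_sum]
        exact Finset.sum_congr rfl fun j _ => by ring
      rw [Finset.sum_congr rfl step]
      rw [Finset.sum_comm' (s := Finset.range N) (t := fun k => Finset.Ico (k + 1) N)
        (t' := Finset.range N) (s' := fun j => Finset.range j)
        (by intro k j; simp only [Finset.mem_range, Finset.mem_Ico]; omega)]
      refine Finset.sum_congr rfl fun k _ => Finset.sum_congr rfl fun j _ => by ring
    have hcomb : T1 + T2
        ≤ ∑ k ∈ Finset.range N, ∑ j ∈ Finset.range k,
            (A j * C k) * (g j / d j + g k / d k) := by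
      rw [hT1', hT2', ← Finset.sum_add_distrib]
      refine Finset.sum_le_sum fun k hk => ?_
      rw [← Finset.sum_add_distrib]
      refine Finset.sum_le_sum fun j hj => ?_
      have hkN : k < N := Finset.mem_range.1 hk
      have hjN : j < N := lt_trans (Finset.mem_range.1 hj) hkN
      have h1 : g k * (A j * C k) / d j + g j * (A j * C k) / d k
          = (A j * C k) * (g k / d j + g j / d k) := by ring
      rw [h1]
      exact mul_le_mul_of_nonneg_left (hcheb j k hjN hkN)
        (mul_nonneg (hA0 j hjN) (hC0 k hkN))
    refine le_trans hcomb ?_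
    have hVsplit : ∑ k ∈ Finset.range N, ∑ j ∈ Finset.range k,
          (A j * C k) * (g j / d j + g k / d k)
        = (∑ k ∈ Finset.range N, ∑ j ∈ Finset.range k, (A j * (g j / d j)) * C k)
          + ∑ k ∈ Finset.range N, (C k * (g k / d k)) * (∑ j ∈ Finset.range k, A j) := by
      rw [← Finset.sum_add_distrib]
      refine Finset.sum_congr rfl fun k hk => ?_
      rw [Finset.mul_sum, ← Finset.sum_add_distrib]
      exact Finset.sum_congr rfl fun j _ => by ring
    have hV1 : ∑ k ∈ Finset.range N, ∑ j ∈ Finset.range k, (A j * (g j / d j)) * C k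
        = ∑ j ∈ Finset.range N, (A j * (g j / d j)) * (Fn (j + 1) - Fn N) := by
      rw [Finset.sum_comm' (s := Finset.range N) (t := fun k => Finset.range k)
        (t' := Finset.range N) (s' := fun j => Finset.Ico (j + 1) N)
        (by intro k j; simp only [Finset.mem_range, Finset.mem_Ico]; omega)]
      refine Finset.sum_congr rfl fun j hj => ?_
      rw [← Finset.mul_sum, teleC (j + 1) N (Finset.mem_range.1 hj)]
    rw [hVsplit, hV1, hU_def, ← Finset.sum_add_distrib]
    refine Finset.sum_le_sum fun k hk => ?_
    have hkN : k < N := Finset.mem_range.1 hk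
    have hb1 : (A k * (g k / d k)) * (Fn (k + 1) - Fn N)
        ≤ (1 - E k * Fn (k + 1)) * (g k / d k) := by
      have h1 : (A k * (g k / d k)) * (Fn (k + 1) - Fn N)
          ≤ (A k * (g k / d k)) * Fn (k + 1) := by
        apply mul_le_mul_of_nonneg_left _ (mul_nonneg (hA0 k hkN) (hgd k hkN))
        linarith [hFpos N]
      have h2 : (A k * (g k / d k)) * Fn (k + 1) = (1 - E k * Fn (k + 1)) * (g k / d k) := by
        have h := hEF (k + 1)
        simp only [hA_def]
        linear_combination (g k / d k) * h
      linarith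
    have hb2 : (C k * (g k / d k)) * (∑ j ∈ Finset.range k, A j)
        ≤ (1 - E k * Fn (k + 1)) * (g k / d k) := by
      rw [teleA k]
      have h1 : (C k * (g k / d k)) * (E k - E 0) ≤ (C k * (g k / d k)) * E k := by
        apply mul_le_mul_of_nonneg_left _ (mul_nonneg (hC0 k hkN) (hgd k hkN))
        linarith [hEpos 0]
      have h2 : (C k * (g k / d k)) * E k = (1 - E k * Fn (k + 1)) * (g k / d k) := by
        have h := hEF k
        simp only [hC_def]
        linear_combination (g k / d k) * h
      linarith
    linarith

lemma cheb_rpow {s a b : ℝ} (hs : 0 ≤ s) (ha : 0 < a) (hb : 0 < b) :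
    b ^ (-s) / a + a ^ (-s) / b ≤ a ^ (-s) / a + b ^ (-s) / b := by
  have hprod : 0 ≤ (a ^ (-s) - b ^ (-s)) * (b - a) := by
    rcases le_total a b with h | h
    · have h1 : b ^ (-s) ≤ a ^ (-s) := by
        rw [Real.rpow_neg ha.le, Real.rpow_neg hb.le]
        exact inv_anti₀ (Real.rpow_pos_of_pos ha s) (Real.rpow_le_rpow ha.le h hs)
      nlinarith
    · have h1 : a ^ (-s) ≤ b ^ (-s) := by
        rw [Real.rpow_neg ha.le, Real.rpow_neg hb.le]
        exact inv_anti₀ (Real.rpow_pos_of_pos hb s) (Real.rpow_le_rpow hb.le h hs)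
      nlinarith
  have hid : a ^ (-s) / a + b ^ (-s) / b - (b ^ (-s) / a + a ^ (-s) / b)
      = (a ^ (-s) - b ^ (-s)) * (b - a) / (a * b) := by
    field_simp
    ring
  nlinarith [div_nonneg hprod (mul_nonneg ha.le hb.le)]

/-- Monotonicity of the `L^p`-type sums along the flow. -/
lemma H_antitone (ε : ℝ) (hε : 0 < ε) (N : ℕ) (x : ℝ → ℕ → ℝ)
    (hx : IsParticleSol ε N x) (s : ℝ) (hs : 1 ≤ s) :
    AntitoneOn (fun t => ∑ k ∈ Finset.range N, (x t (k + 1) - x t k) ^ (1 - s))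
      (Set.Ici (0 : ℝ)) := by
  obtain ⟨hord, hderiv⟩ := hx
  have hder : ∀ t ∈ Set.Ici (0 : ℝ), HasDerivWithinAt
      (fun t => ∑ k ∈ Finset.range N, (x t (k + 1) - x t k) ^ (1 - s))
      ((1 - s) * ∑ k ∈ Finset.range N, (x t (k + 1) - x t k) ^ (-s) *
        (particleRHS ε N (x t) (k + 1) - particleRHS ε N (x t) k)) (Set.Ici 0) t := by
    intro t ht
    rw [Finset.mul_sum]
    apply HasDerivWithinAt.fun_sum
    intro k hk
    have hkN : k < N := Finset.mem_range.1 hk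
    have hd : HasDerivWithinAt (fun u => x u (k + 1) - x u k)
        (particleRHS ε N (x t) (k + 1) - particleRHS ε N (x t) k) (Set.Ici 0) t :=
      (hderiv (k + 1) (Nat.succ_le_of_lt hkN) t ht).sub (hderiv k (Nat.le_of_lt hkN) t ht)
    have hpos : (0 : ℝ) < x t (k + 1) - x t k := sub_pos.2 (hord t ht k hkN)
    have hr := (Real.hasDerivAt_rpow_const (x := x t (k + 1) - x t k) (p := 1 - s)
      (Or.inl hpos.ne')).comp_hasDerivWithinAt t hd
    have : (1 - s) * (x t (k + 1) - x t k) ^ (1 - s - 1) *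
          (particleRHS ε N (x t) (k + 1) - particleRHS ε N (x t) k)
        = (1 - s) * ((x t (k + 1) - x t k) ^ (-s) *
          (particleRHS ε N (x t) (k + 1) - particleRHS ε N (x t) k)) := by
      rw [show (1 - s - 1 : ℝ) = -s by ring]
      ring
    rw [this] at hr
    exact hr
  have hnonpos : ∀ t ∈ Set.Ici (0 : ℝ),
      (1 - s) * ∑ k ∈ Finset.range N, (x t (k + 1) - x t k) ^ (-s) *
        (particleRHS ε N (x t) (k + 1) - particleRHS ε N (x t) k) ≤ 0 := by
    intro t ht
    apply mul_nonpos_of_nonpos_of_nonneg (by linarith)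
    apply key ε hε N (x t) (hord t ht)
    · intro k hk
      exact (Real.rpow_pos_of_pos (sub_pos.2 (hord t ht k hk)) _).le
    · intro j k hjN hkN
      exact cheb_rpow (by linarith) (sub_pos.2 (hord t ht j hjN))
        (sub_pos.2 (hord t ht k hkN))
  apply antitoneOn_of_deriv_nonpos (convex_Ici 0)
  · exact fun t ht => (hder t ht).continuousWithinAt
  · intro t ht
    rw [interior_Ici] at ht
    exact ((hder t (Set.mem_Ici.2 (le_of_lt ht))).hasDerivAt (Ici_mem_nhds ht)).differentiableAt.differentiableWithinAt
  · intro t ht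
    rw [interior_Ici] at ht
    rw [((hder t (Set.mem_Ici.2 (le_of_lt ht))).hasDerivAt (Ici_mem_nhds ht)).deriv]
    exact hnonpos t (Set.mem_Ici.2 (le_of_lt ht))

lemma ord_mono {N : ℕ} {x : ℕ → ℝ} (hord : ∀ i < N, x i < x (i + 1)) :
    ∀ i j, i ≤ j → j ≤ N → x i ≤ x j := by
  intro i j hij hjN
  induction j with
  | zero => simp_all
  | succ m ih =>
    rcases Nat.eq_or_lt_of_le hij with h | h
    · simp [h]
    · exact le_trans (ih (Nat.lt_succ_iff.1 h) (le_trans (Nat.le_succ m) hjN))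
        (hord m (Nat.lt_of_succ_le hjN)).le

lemma discDens_not_mem {N : ℕ} {x : ℝ → ℕ → ℝ} {t : ℝ}
    (hord : ∀ i < N, x t i < x t (i + 1)) {k : ℕ} (hk : k < N) {y : ℝ}
    (hy : y ∈ Set.Ico (x t k) (x t (k + 1))) :
    ∀ j, j ∈ Finset.range N → j ≠ k → y ∉ Set.Ico (x t j) (x t (j + 1)) := by
  intro j hj hne hmem
  have hjN := Finset.mem_range.1 hj
  rcases lt_or_gt_of_ne hne with h | h
  · have hle : x t (j + 1) ≤ x t k := ord_mono hord _ _ h hk.le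
    exact absurd hmem.2 (not_lt.2 (le_trans hle hy.1))
  · have hle : x t (k + 1) ≤ x t j := ord_mono hord _ _ h hjN.le
    exact absurd hy.2 (not_lt.2 (le_trans hle hmem.1))

lemma discDens_value {N : ℕ} {x : ℝ → ℕ → ℝ} {t : ℝ}
    (hord : ∀ i < N, x t i < x t (i + 1)) {k : ℕ} (hk : k < N) {y : ℝ}
    (hy : y ∈ Set.Ico (x t k) (x t (k + 1))) :
    discDens N x y t = 1 / ((N : ℝ) * (x t (k + 1) - x t k)) := by
  unfold discDens
  rw [Finset.sum_eq_single_of_mem k (Finset.mem_range.2 hk)]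
  · rw [Set.indicator_of_mem hy]
  · intro j hj hne
    exact Set.indicator_of_notMem (discDens_not_mem hord hk hy j hj hne) _

lemma discDens_zero {N : ℕ} {x : ℝ → ℕ → ℝ} {t : ℝ} {y : ℝ}
    (hy : ∀ j ∈ Finset.range N, y ∉ Set.Ico (x t j) (x t (j + 1))) :
    discDens N x y t = 0 := by
  unfold discDens
  exact Finset.sum_eq_zero fun j hj => Set.indicator_of_notMem (hy j hj) _

lemma eLpNorm_discDens (N : ℕ) (x : ℝ → ℕ → ℝ) (t : ℝ)
    (hord : ∀ i < N, x t i < x t (i + 1)) (p : ℝ) (hp : 1 ≤ p) :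
    eLpNorm (fun y => discDens N x y t) (ENNReal.ofReal p) volume
      = (ENNReal.ofReal (∑ k ∈ Finset.range N,
          (1 / ((N : ℝ) * (x t (k + 1) - x t k))) ^ p * (x t (k + 1) - x t k))) ^ (1 / p) := by
  have hp0 : (0 : ℝ) < p := lt_of_lt_of_le one_pos hp
  have hne0 : (ENNReal.ofReal p) ≠ 0 := by
    simp only [ne_eq, ENNReal.ofReal_eq_zero, not_le]; exact hp0
  have hR : ∀ k, k < N → 0 ≤ 1 / ((N : ℝ) * (x t (k + 1) - x t k)) := by
    intro k hk
    have h1 : (0 : ℝ) < N := by exact_mod_cast Nat.zero_lt_of_lt hk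
    have h2 : (0 : ℝ) < x t (k + 1) - x t k := sub_pos.2 (hord k hk)
    positivity
  rw [MeasureTheory.eLpNorm_eq_lintegral_rpow_enorm_toReal hne0 ENNReal.ofReal_ne_top,
    ENNReal.toReal_ofReal hp0.le]
  congr 1
  have hpt : ∀ y : ℝ, ‖discDens N x y t‖ₑ ^ p
      = ∑ k ∈ Finset.range N, Set.indicator (Set.Ico (x t k) (x t (k + 1)))
          (fun _ => ENNReal.ofReal ((1 / ((N : ℝ) * (x t (k + 1) - x t k))) ^ p)) y := by
    intro y
    by_cases hy : ∃ k, k ∈ Finset.range N ∧ y ∈ Set.Ico (x t k) (x t (k + 1))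
    · obtain ⟨k, hk, hyk⟩ := hy
      have hkN := Finset.mem_range.1 hk
      rw [discDens_value hord hkN hyk,
        Finset.sum_eq_single_of_mem k hk
          (fun j hj hne => Set.indicator_of_notMem
            (discDens_not_mem hord hkN hyk j hj hne) _),
        Set.indicator_of_mem hyk,
        Real.enorm_eq_ofReal (hR k hkN),
        ENNReal.ofReal_rpow_of_nonneg (hR k hkN) hp0.le]
    · push_neg at hy
      rw [discDens_zero hy,
        Finset.sum_eq_zero fun j hj => Set.indicator_of_notMem (hy j hj) _]
      simp [ENNReal.zero_rpow_of_pos hp0]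
  rw [MeasureTheory.lintegral_congr hpt,
    MeasureTheory.lintegral_finset_sum _
      (fun k _ => Measurable.indicator measurable_const measurableSet_Ico)]
  have hterm : ∀ k ∈ Finset.range N,
      (∫⁻ y, Set.indicator (Set.Ico (x t k) (x t (k + 1)))
        (fun _ => ENNReal.ofReal ((1 / ((N : ℝ) * (x t (k + 1) - x t k))) ^ p)) y)
      = ENNReal.ofReal ((1 / ((N : ℝ) * (x t (k + 1) - x t k))) ^ p
          * (x t (k + 1) - x t k)) := by
    intro k hk
    have hkN := Finset.mem_range.1 hk
    rw [MeasureTheory.lintegral_indicator_const measurableSet_Ico, Real.volume_Ico,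
      ← ENNReal.ofReal_mul (Real.rpow_nonneg (hR k hkN) p)]
  rw [Finset.sum_congr rfl hterm, ← ENNReal.ofReal_sum_of_nonneg]
  intro k hk
  have hkN := Finset.mem_range.1 hk
  exact mul_nonneg (Real.rpow_nonneg (hR k hkN) p) (sub_pos.2 (hord k hkN)).le

lemma term_eq {N : ℕ} (hN : 1 ≤ N) {d p : ℝ} (hd : 0 < d) :
    (1 / ((N : ℝ) * d)) ^ p * d = (N : ℝ) ^ (-p) * d ^ (1 - p) := by
  have hN0 : (0 : ℝ) < N := by exact_mod_cast hN
  have h1 : ((N : ℝ) ^ p) ≠ 0 := (Real.rpow_pos_of_pos hN0 p).ne'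
  have h2 : (d ^ p) ≠ 0 := (Real.rpow_pos_of_pos hd p).ne'
  rw [one_div, Real.inv_rpow (by positivity), Real.mul_rpow hN0.le hd.le,
    Real.rpow_neg hN0.le, Real.rpow_sub hd, Real.rpow_one]
  field_simp

lemma gap_lower (ε : ℝ) (hε : 0 < ε) (N : ℕ) (hN : 1 ≤ N) (x : ℝ → ℕ → ℝ)
    (hx : IsParticleSol ε N x) (t : ℝ) (ht : 0 ≤ t) (hne : (Finset.range N).Nonempty) :
    ∀ k < N, (Finset.range N).inf' hne (fun j => x 0 (j + 1) - x 0 j)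
      ≤ x t (k + 1) - x t k := by
  set m := (Finset.range N).inf' hne (fun j => x 0 (j + 1) - x 0 j) with hm_def
  have hd0 : ∀ j < N, 0 < x 0 (j + 1) - x 0 j := fun j hj => sub_pos.2 (hx.1 0 le_rfl j hj)
  have hmpos : 0 < m := by
    obtain ⟨j0, hj0, hm⟩ := Finset.exists_mem_eq_inf' hne (fun j => x 0 (j + 1) - x 0 j)
    rw [hm_def, hm]
    exact hd0 j0 (Finset.mem_range.1 hj0)
  intro k hk
  by_contra hlt
  push_neg at hlt
  have hdt : ∀ j < N, 0 < x t (j + 1) - x t j := fun j hj => sub_pos.2 (hx.1 t ht j hj)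
  have hdk := hdt k hk
  have hratio : 1 < m / (x t (k + 1) - x t k) := (one_lt_div hdk).2 hlt
  obtain ⟨n, hn⟩ := pow_unbounded_of_one_lt (N : ℝ) hratio
  have hs1 : (1 : ℝ) ≤ (n : ℝ) + 1 := by
    have : (0 : ℝ) ≤ (n : ℝ) := Nat.cast_nonneg n
    linarith
  have hH := H_antitone ε hε N x hx ((n : ℝ) + 1) hs1 Set.self_mem_Ici ht ht
  simp only [show (1 : ℝ) - ((n : ℝ) + 1) = -(n : ℝ) by ring] at hH
  have h1 : (x t (k + 1) - x t k) ^ (-(n : ℝ))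
      ≤ ∑ j ∈ Finset.range N, (x t (j + 1) - x t j) ^ (-(n : ℝ)) :=
    Finset.single_le_sum
      (fun j hj => Real.rpow_nonneg (hdt j (Finset.mem_range.1 hj)).le _)
      (Finset.mem_range.2 hk)
  have h2 : ∑ j ∈ Finset.range N, (x 0 (j + 1) - x 0 j) ^ (-(n : ℝ))
      ≤ (N : ℝ) * m ^ (-(n : ℝ)) := by
    have hb : ∀ j ∈ Finset.range N,
        (x 0 (j + 1) - x 0 j) ^ (-(n : ℝ)) ≤ m ^ (-(n : ℝ)) := by
      intro j hj
      have hjN := Finset.mem_range.1 hj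
      rw [Real.rpow_neg (hd0 j hjN).le, Real.rpow_neg hmpos.le]
      exact inv_anti₀ (Real.rpow_pos_of_pos hmpos _)
        (Real.rpow_le_rpow hmpos.le (Finset.inf'_le _ hj) (Nat.cast_nonneg n))
    calc ∑ j ∈ Finset.range N, (x 0 (j + 1) - x 0 j) ^ (-(n : ℝ))
        ≤ ∑ _j ∈ Finset.range N, m ^ (-(n : ℝ)) := Finset.sum_le_sum hb
      _ = (N : ℝ) * m ^ (-(n : ℝ)) := by
          rw [Finset.sum_const, Finset.card_range, nsmul_eq_mul]
  have hchain : (x t (k + 1) - x t k) ^ (-(n : ℝ)) ≤ (N : ℝ) * m ^ (-(n : ℝ)) :=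
    le_trans h1 (le_trans hH h2)
  set d := x t (k + 1) - x t k
  have e1 : d ^ (-(n : ℝ)) = (d ^ n)⁻¹ := by
    rw [Real.rpow_neg hdk.le, Real.rpow_natCast]
  have e2 : m ^ (-(n : ℝ)) = (m ^ n)⁻¹ := by
    rw [Real.rpow_neg hmpos.le, Real.rpow_natCast]
  rw [e1, e2] at hchain
  have hdn : (0 : ℝ) < d ^ n := pow_pos hdk n
  have hmn : (0 : ℝ) < m ^ n := pow_pos hmpos n
  have hn' : (N : ℝ) < m ^ n / d ^ n := by rwa [div_pow] at hn
  have hcontr : (N : ℝ) * (m ^ n)⁻¹ < (d ^ n)⁻¹ := by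
    have h3 := mul_lt_mul_of_pos_right hn' (inv_pos.2 hmn)
    have h4 : m ^ n / d ^ n * (m ^ n)⁻¹ = (d ^ n)⁻¹ := by
      field_simp
    rwa [h4] at h3
  exact absurd (lt_of_le_of_lt hchain hcontr) (lt_irrefl _)

/-- `L^p` estimates for `ρ^N`. For every `p ∈ [1,∞)` and `t ≥ 0`,
`‖ρ^N(·,t)‖_{L^p} ≤ max{‖ρ^N(·,0)‖_{L^p}, (2ε)^{-(p-1)/p}}`, and for `p = ∞`,
`‖ρ^N(·,t)‖_{L^∞} ≤ max{‖ρ^N(·,0)‖_{L^∞}, 1/(2ε)}`. -/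
theorem stmt4 (ε : ℝ) (hε : 0 < ε) (N : ℕ) (hN : 1 ≤ N) (x : ℝ → ℕ → ℝ)
    (hx : IsParticleSol ε N x) :
    (∀ p : ℝ, 1 ≤ p → ∀ t : ℝ, 0 ≤ t →
      eLpNorm (fun y => discDens N x y t) (ENNReal.ofReal p) volume ≤
        max (eLpNorm (fun y => discDens N x y 0) (ENNReal.ofReal p) volume)
          (ENNReal.ofReal ((2 * ε) ^ (-((p - 1) / p))))) ∧
    (∀ t : ℝ, 0 ≤ t →
      eLpNorm (fun y => discDens N x y t) ⊤ volume ≤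
        max (eLpNorm (fun y => discDens N x y 0) ⊤ volume)
          (ENNReal.ofReal (1 / (2 * ε)))) := by
  have hNpos : (0 : ℝ) < N := by exact_mod_cast hN
  constructor
  · intro p hp t ht
    have hp0 : (0 : ℝ) < p := lt_of_lt_of_le one_pos hp
    rw [eLpNorm_discDens N x t (hx.1 t ht) p hp, eLpNorm_discDens N x 0 (hx.1 0 le_rfl) p hp]
    refine le_trans ?_ (le_max_left _ _)
    refine ENNReal.rpow_le_rpow (ENNReal.ofReal_le_ofReal ?_) (by positivity)
    have hH := H_antitone ε hε N x hx p hp Set.self_mem_Ici ht ht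
    calc ∑ k ∈ Finset.range N,
          (1 / ((N : ℝ) * (x t (k + 1) - x t k))) ^ p * (x t (k + 1) - x t k)
        = (N : ℝ) ^ (-p) * ∑ k ∈ Finset.range N, (x t (k + 1) - x t k) ^ (1 - p) := by
          rw [Finset.mul_sum]
          exact Finset.sum_congr rfl fun k hk =>
            term_eq hN (sub_pos.2 (hx.1 t ht k (Finset.mem_range.1 hk)))
      _ ≤ (N : ℝ) ^ (-p) * ∑ k ∈ Finset.range N, (x 0 (k + 1) - x 0 k) ^ (1 - p) :=
          mul_le_mul_of_nonneg_left hH (Real.rpow_nonneg hNpos.le _)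
      _ = ∑ k ∈ Finset.range N,
          (1 / ((N : ℝ) * (x 0 (k + 1) - x 0 k))) ^ p * (x 0 (k + 1) - x 0 k) := by
          rw [Finset.mul_sum]
          exact (Finset.sum_congr rfl fun k hk =>
            term_eq hN (sub_pos.2 (hx.1 0 le_rfl k (Finset.mem_range.1 hk)))).symm
  · intro t ht
    have hne : (Finset.range N).Nonempty := ⟨0, Finset.mem_range.2 hN⟩
    set m := (Finset.range N).inf' hne (fun j => x 0 (j + 1) - x 0 j) with hm_def
    have hd0 : ∀ j < N, 0 < x 0 (j + 1) - x 0 j := fun j hj => sub_pos.2 (hx.1 0 le_rfl j hj)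
    have hmpos : 0 < m := by
      obtain ⟨j0, hj0, hmeq⟩ := Finset.exists_mem_eq_inf' hne (fun j => x 0 (j + 1) - x 0 j)
      rw [hm_def, hmeq]
      exact hd0 j0 (Finset.mem_range.1 hj0)
    have hglow := gap_lower ε hε N hN x hx t ht hne
    calc eLpNorm (fun y => discDens N x y t) ⊤ volume
        ≤ ENNReal.ofReal (1 / ((N : ℝ) * m)) := by
          rw [MeasureTheory.eLpNorm_exponent_top]
          refine essSup_le_of_ae_le _ (MeasureTheory.ae_of_all _ fun y => ?_)
          simp only
          by_cases hy : ∃ k, k ∈ Finset.range N ∧ y ∈ Set.Ico (x t k) (x t (k + 1))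
          · obtain ⟨k, hk, hyk⟩ := hy
            have hkN := Finset.mem_range.1 hk
            have hdk : 0 < x t (k + 1) - x t k := sub_pos.2 (hx.1 t ht k hkN)
            rw [discDens_value (hx.1 t ht) hkN hyk,
              Real.enorm_eq_ofReal (le_of_lt (one_div_pos.2 (mul_pos hNpos hdk)))]
            apply ENNReal.ofReal_le_ofReal
            exact one_div_le_one_div_of_le (mul_pos hNpos hmpos)
              (mul_le_mul_of_nonneg_left (hglow k hkN) hNpos.le)
          · push_neg at hy
            rw [discDens_zero hy]
            simp
      _ ≤ eLpNorm (fun y => discDens N x y 0) ⊤ volume := by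
          obtain ⟨j0, hj0, hmeq⟩ := Finset.exists_mem_eq_inf' hne (fun j => x 0 (j + 1) - x 0 j)
          have hj0N := Finset.mem_range.1 hj0
          by_contra hlt
          push_neg at hlt
          rw [MeasureTheory.eLpNorm_exponent_top] at hlt
          have hae := ae_lt_of_essSup_lt hlt
          rw [MeasureTheory.ae_iff] at hae
          have hsub : Set.Ico (x 0 j0) (x 0 (j0 + 1)) ⊆
              {y | ¬ (‖discDens N x y 0‖ₑ
                < ENNReal.ofReal (1 / ((N : ℝ) * m)))} := by
            intro y hy
            simp only [Set.mem_setOf_eq, not_lt]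
            rw [discDens_value (hx.1 0 le_rfl) hj0N hy,
              Real.enorm_eq_ofReal
                (le_of_lt (one_div_pos.2 (mul_pos hNpos (hd0 j0 hj0N))))]
            apply ENNReal.ofReal_le_ofReal
            rw [hm_def, hmeq]
          have h0 := measure_mono_null hsub hae
          rw [Real.volume_Ico, ENNReal.ofReal_eq_zero] at h0
          linarith [hd0 j0 hj0N]
      _ ≤ max (eLpNorm (fun y => discDens N x y 0) ⊤ volume)
            (ENNReal.ofReal (1 / (2 * ε))) := le_max_left _ _
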